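/- For an orthodomain X with no basic maximal elements, the following are equivalent: (1) each basic element has a direction; (2) each basic element has exactly two directions. -/

import Mathlib

section OrthodomainDefs

/-- Order-theoretic compactness: `k` is compact if whenever `k ≤ ⋁D` for a
nonempty directed set `D` having a least upper bound, then `k ≤ d` for some
`d ∈ D`. -/
def CompactIn {P : Type*} [PartialOrder P] (k : P) : Prop :=
  ∀ D : Set P, D.Nonempty → DirectedOn (· ≤ ·) D →
    ∀ l, IsLUB D l → k ≤ l → ∃ d ∈ D, k ≤ d

/-- A poset is a finite partition lattice if it is order-isomorphic to the
lattice of partitions (equivalence relations) of a finite set. -/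
def IsPartitionLat (P : Type*) [PartialOrder P] : Prop :=
  ∃ (α : Type) (_ : Finite α), Nonempty (P ≃o Setoid α)

/-- A Boolean domain: an algebraic (complete, compactly generated) lattice in
which the principal downset of each compact element is a finite partition
lattice. -/
def IsBooleanDomain (P : Type*) [PartialOrder P] : Prop :=
  (∀ S : Set P, ∃ l, IsLUB S l) ∧
  (∀ x : P, IsLUB {k : P | CompactIn k ∧ k ≤ x} x) ∧
  (∀ k : P, CompactIn k → IsPartitionLat {y : P // y ≤ k})

variable (X : Type*) [PartialOrder X] [OrderBot X]

/-- An orthodomain: a poset with least element in which (1) directed subsets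
have joins; (2) the poset is atomistic and atoms are compact; (3) every
principal ideal is a Boolean domain; (4) distinct atoms covered by a common
element join to that element. -/
structure IsOrthodomain : Prop where
  directed_joins : ∀ D : Set X, D.Nonempty → DirectedOn (· ≤ ·) D → ∃ l, IsLUB D l
  atomistic : ∀ x : X, IsLUB {a : X | IsAtom a ∧ a ≤ x} x
  atoms_compact : ∀ a : X, IsAtom a → CompactIn a
  downset_boolean : ∀ x : X, IsBooleanDomain {y : X // y ≤ x}
  atom_cover : ∀ x y w : X, IsAtom x → IsAtom y → x ≠ y →
    x ⋖ w → y ⋖ w → IsLUB {x, y} w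

end OrthodomainDefs

section Directions

variable {X : Type*} [PartialOrder X] [OrderBot X]

/-- `j` is the join of `a` and `b` inside the principal ideal `↓t`. -/
def IsJoinIn (t a b j : X) : Prop :=
  a ≤ j ∧ b ≤ j ∧ j ≤ t ∧ ∀ c : X, c ≤ t → a ≤ c → b ≤ c → j ≤ c

/-- `x` is a dual modular element of the Boolean domain `↓t`:
`(x ∨ y) ∧ z = x ∨ (y ∧ z)` whenever `x ≤ z`, and
`(w ∨ x) ∧ y = w ∨ (x ∧ y)` whenever `w ≤ y` (all elements and lattice
operations taken inside `↓t`; meets in `↓t` agree with greatest lower bounds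
in `X`). -/
def DualModularIn (t x : X) : Prop :=
  x ≤ t ∧
  (∀ y z j m m' : X, y ≤ t → z ≤ t → x ≤ z → IsJoinIn t x y j →
    IsGLB {j, z} m → IsGLB {y, z} m' → IsJoinIn t x m' m) ∧
  (∀ w y j m m' : X, w ≤ t → y ≤ t → w ≤ y → IsJoinIn t w x j →
    IsGLB {j, y} m → IsGLB {x, y} m' → IsJoinIn t w m' m)

/-- A basic element: the least element or an atom. -/
def BasicIn (x : X) : Prop := x = ⊥ ∨ IsAtom x

/-- `(y, z)` is a principal pair for the basic element `x` in the Boolean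
domain `↓t`: `y` and `z` are dual modular in `↓t`, `y ∧ z = x`, and either
`y = ⊤` and `z` is basic, or `z = ⊤` and `y` is basic, or `y ∨ z = ⊤` and
`y ∧ z = x` is basic but not dual modular. -/
def PrincipalPairFor (t x y z : X) : Prop :=
  DualModularIn t y ∧ DualModularIn t z ∧ IsGLB {y, z} x ∧
  ((y = t ∧ BasicIn z) ∨ (z = t ∧ BasicIn y) ∨
    (IsJoinIn t y z t ∧ BasicIn x ∧ ¬ DualModularIn t x))

/-- A direction for a basic element `x` of an orthodomain `X`: a map
`d : ↑x → X²` such that (1) `d y` is a principal pair for `x` in the Boolean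
domain `↓y`; (2) if `y ≤ z` and `d z = (v, w)` then `d y = (y ∧ v, y ∧ w)`;
(3) if `x ⋖ y, z` with `d y = (x, y)` and `d z = (z, x)`, then `y ∨ z` exists
and covers both `y` and `z`. -/
def IsDirectionFor (x : X) (d : {y : X // x ≤ y} → X × X) : Prop :=
  BasicIn x ∧
  (∀ y : {y : X // x ≤ y}, PrincipalPairFor y.1 x (d y).1 (d y).2) ∧
  (∀ y z : {y : X // x ≤ y}, y.1 ≤ z.1 →
    IsGLB {y.1, (d z).1} (d y).1 ∧ IsGLB {y.1, (d z).2} (d y).2) ∧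
  (∀ y z : {y : X // x ≤ y}, x ⋖ y.1 → x ⋖ z.1 →
    d y = (x, y.1) → d z = (z.1, x) →
    ∃ j : X, IsLUB {y.1, z.1} j ∧ y.1 ⋖ j ∧ z.1 ⋖ j)

end Directions
section AuxLemmas

variable {X : Type*} [PartialOrder X] [OrderBot X]

lemma glbp_left {a b : X} (h : a ≤ b) : IsGLB {a, b} a := by
  constructor
  · intro c hc
    rcases hc with rfl | hc
    · exact le_rfl
    · rw [Set.mem_singleton_iff] at hc; subst hc; exact h
  · intro c hc; exact hc (Set.mem_insert _ _)

lemma glbp_right {a b : X} (h : b ≤ a) : IsGLB {a, b} b := by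
  rw [Set.pair_comm]; exact glbp_left h

lemma pair_x_le_left {t x v w : X} (hp : PrincipalPairFor t x v w) : x ≤ v :=
  hp.2.2.1.1 (Set.mem_insert _ _)

lemma pair_x_le_right {t x v w : X} (hp : PrincipalPairFor t x v w) : x ≤ w :=
  hp.2.2.1.1 (Set.mem_insert_of_mem _ rfl)

/-- Case analysis for principal pairs. -/
lemma pair_cases {t x v w : X} (hp : PrincipalPairFor t x v w) :
    (v = t ∧ w = x) ∨ (v = x ∧ w = t) ∨
      (x < v ∧ v < t ∧ x < w ∧ w < t ∧ ¬ DualModularIn t x) := by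
  obtain ⟨dmv, dmw, hglb, hor⟩ := hp
  have hxv : x ≤ v := hglb.1 (Set.mem_insert _ _)
  have hxw : x ≤ w := hglb.1 (Set.mem_insert_of_mem _ rfl)
  have hvt : v ≤ t := dmv.1
  have hwt : w ≤ t := dmw.1
  rcases hor with ⟨hv, _⟩ | ⟨hw, _⟩ | ⟨hj, _, hnd⟩
  · left
    refine ⟨hv, ?_⟩
    subst hv
    exact (hglb.unique (glbp_right hwt)).symm
  · right; left
    refine ⟨?_, hw⟩
    subst hw
    exact (hglb.unique (glbp_left hvt)).symm
  · right; right
    have hvx : v ≠ x := fun hvx => hnd (hvx ▸ dmv)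
    have hwx : w ≠ x := fun hwx => hnd (hwx ▸ dmw)
    have hvt' : v ≠ t := by
      intro hvt'
      subst hvt'
      exact hwx (hglb.unique (glbp_right hwt)).symm
    have hwt' : w ≠ t := by
      intro hwt'
      subst hwt'
      exact hvx (hglb.unique (glbp_left hvt)).symm
    exact ⟨lt_of_le_of_ne hxv (Ne.symm hvx), lt_of_le_of_ne hvt hvt',
      lt_of_le_of_ne hxw (Ne.symm hwx), lt_of_le_of_ne hwt hwt', hnd⟩

/-- A principal pair at the element itself is `(x, x)`. -/
lemma pair_self {x v w : X} (hp : PrincipalPairFor x x v w) : v = x ∧ w = x :=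
  ⟨le_antisymm hp.1.1 (pair_x_le_left hp), le_antisymm hp.2.1.1 (pair_x_le_right hp)⟩

/-- A principal pair at a cover of `x` is `(x, t)` or `(t, x)`. -/
lemma pair_cover {t x v w : X} (hc : x ⋖ t) (hp : PrincipalPairFor t x v w) :
    (v = x ∧ w = t) ∨ (v = t ∧ w = x) := by
  rcases pair_cases hp with ⟨h1, h2⟩ | ⟨h1, h2⟩ | ⟨h1, h2, _⟩
  · exact Or.inr ⟨h1, h2⟩
  · exact Or.inl ⟨h1, h2⟩
  · exact absurd h2 (hc.2 h1)

end AuxLemmas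
section AuxLemmas2

variable {X : Type*} [PartialOrder X] [OrderBot X]

lemma isJoinIn_comm {t a b j : X} (h : IsJoinIn t a b j) : IsJoinIn t b a j :=
  ⟨h.2.1, h.1, h.2.2.1, fun c hc hb ha => h.2.2.2 c hc ha hb⟩

lemma pair_swap {t x v w : X} (hp : PrincipalPairFor t x v w) :
    PrincipalPairFor t x w v := by
  obtain ⟨dmv, dmw, hglb, hor⟩ := hp
  refine ⟨dmw, dmv, by rwa [Set.pair_comm], ?_⟩
  rcases hor with ⟨h1, h2⟩ | ⟨h1, h2⟩ | ⟨h1, h2, h3⟩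
  · exact Or.inr (Or.inl ⟨h1, h2⟩)
  · exact Or.inl ⟨h1, h2⟩
  · exact Or.inr (Or.inr ⟨isJoinIn_comm h1, h2, h3⟩)

/-- The orthocomplement (componentwise swap) of a map. -/
def swapD {x : X} (d : {y : X // x ≤ y} → X × X) : {y : X // x ≤ y} → X × X :=
  fun y => ((d y).2, (d y).1)

lemma isDirection_swap {x : X} {d : {y : X // x ≤ y} → X × X}
    (hd : IsDirectionFor x d) : IsDirectionFor x (swapD d) := by
  obtain ⟨hb, hpair, hres, hcov⟩ := hd
  refine ⟨hb, fun y => pair_swap (hpair y), fun y z hyz => ⟨(hres y z hyz).2, (hres y z hyz).1⟩, ?_⟩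
  intro y z hy hz hdy hdz
  have h1 : (d y).2 = x := congrArg Prod.fst hdy
  have h2 : (d y).1 = y.1 := congrArg Prod.snd hdy
  have h3 : (d z).2 = z.1 := congrArg Prod.fst hdz
  have h4 : (d z).1 = x := congrArg Prod.snd hdz
  obtain ⟨j, hj, hzj, hyj⟩ := hcov z y hz hy
    (Prod.ext_iff.mpr ⟨h4, h3⟩) (Prod.ext_iff.mpr ⟨h2, h1⟩)
  exact ⟨j, by rwa [Set.pair_comm], hyj, hzj⟩

/-- Principal pairs at `x` itself give value `(x,x)`. -/
lemma dir_self {x : X} {d : {y : X // x ≤ y} → X × X} (hd : IsDirectionFor x d)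
    (y : {y : X // x ≤ y}) (hy : y.1 = x) : d y = (x, x) := by
  have hp := hd.2.1 y
  rw [hy] at hp
  obtain ⟨h1, h2⟩ := pair_self hp
  exact Prod.ext_iff.mpr ⟨h1, h2⟩

end AuxLemmas2
section AuxLemmas3

set_option linter.unusedSectionVars false

variable {X : Type*} [PartialOrder X] [OrderBot X]
variable {x : X} {d e : {y : X // x ≤ y} → X × X}

/-- Core contradiction: two directions agreeing (with orientation `(x,p)`) at a
cover `p` cannot disagree at a cover `q` in the configuration shown. -/
lemma ca_core (hd : IsDirectionFor x d) (he : IsDirectionFor x e)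
    (p q : {y : X // x ≤ y}) (hpc : x ⋖ p.1) (hqc : x ⋖ q.1)
    (hdp : d p = (x, p.1)) (hep : e p = (x, p.1))
    (hdq : d q = (q.1, x)) (heq' : e q = (x, q.1)) : False := by
  obtain ⟨j, hj, hpj, hqj⟩ := hd.2.2.2 p q hpc hqc hdp hdq
  have hpj' : p.1 ≤ j := hj.1 (Set.mem_insert _ _)
  have hqj' : q.1 ≤ j := hj.1 (Set.mem_insert_of_mem _ rfl)
  set J : {y : X // x ≤ y} := ⟨j, le_trans hpc.le hpj'⟩ with hJdef
  have hJ1 : J.1 = j := rfl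
  -- analyse d J : it must be a proper pair, giving ¬ DualModularIn j x
  have hnd : ¬ DualModularIn j x := by
    rcases pair_cases (hd.2.1 J) with ⟨h1, _⟩ | ⟨_, h2⟩ | ⟨_, _, _, _, hnd⟩
    · have g := (hd.2.2.1 p J hpj').1
      rw [h1, hJ1] at g
      have h2 : (d p).1 = p.1 := g.unique (glbp_left hpj')
      rw [hdp] at h2
      exact absurd h2 hpc.lt.ne
    · have g := (hd.2.2.1 q J hqj').2
      rw [h2, hJ1] at g
      have h3 : (d q).2 = q.1 := g.unique (glbp_left hqj')
      rw [hdq] at h3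
      exact absurd h3 hqc.lt.ne
    · exact hnd
  -- analyse e J
  rcases pair_cases (he.2.1 J) with ⟨h1, _⟩ | ⟨h1, _⟩ | ⟨_, _, _, hwj, _⟩
  · -- (e J).1 = j : restrict to p
    have g := (he.2.2.1 p J hpj').1
    rw [h1, hJ1] at g
    have h2 : (e p).1 = p.1 := g.unique (glbp_left hpj')
    rw [hep] at h2
    exact hpc.lt.ne h2
  · -- (e J).1 = x : x would be dual modular
    have := (he.2.1 J).1
    rw [h1, hJ1] at this
    exact hnd this
  · -- proper : second component is an upper bound of p, q below j
    have g1 := (he.2.2.1 p J hpj').2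
    have hp1 : p.1 ≤ (e J).2 := by
      have h2 : (e p).2 = p.1 := congrArg Prod.snd hep
      rw [h2] at g1
      exact g1.1 (Set.mem_insert_of_mem _ rfl)
    have g2 := (he.2.2.1 q J hqj').2
    have hq1 : q.1 ≤ (e J).2 := by
      have h2 : (e q).2 = q.1 := congrArg Prod.snd heq'
      rw [h2] at g2
      exact g2.1 (Set.mem_insert_of_mem _ rfl)
    have hub : j ≤ (e J).2 := by
      refine hj.2 ?_
      intro z hz
      rcases hz with rfl | hz
      · exact hp1
      · rw [Set.mem_singleton_iff] at hz; subst hz; exact hq1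
    rw [hJ1] at hwj
    exact absurd hub hwj.not_ge
end AuxLemmas3
section AuxLemmas4

set_option linter.unusedSectionVars false

variable {X : Type*} [PartialOrder X] [OrderBot X]
variable {x : X} {d e : {y : X // x ≤ y} → X × X}

lemma ca_half (hd : IsDirectionFor x d) (he : IsDirectionFor x e)
    (p : {y : X // x ≤ y}) (hpc : x ⋖ p.1)
    (hdp : d p = (x, p.1)) (hep : e p = (x, p.1)) :
    ∀ q : {y : X // x ≤ y}, x ⋖ q.1 → d q = e q := by
  intro q hqc
  by_contra hne
  have hdq := pair_cover hqc (hd.2.1 q)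
  have heq' := pair_cover hqc (he.2.1 q)
  rcases hdq with ⟨h1, h2⟩ | ⟨h1, h2⟩ <;> rcases heq' with ⟨h3, h4⟩ | ⟨h3, h4⟩
  · exact hne (by rw [Prod.ext_iff]; exact ⟨h1.trans h3.symm, h2.trans h4.symm⟩)
  · -- d q = (x, q), e q = (q, x)
    exact ca_core he hd p q hpc hqc hep hdp
      (Prod.ext_iff.mpr ⟨h3, h4⟩) (Prod.ext_iff.mpr ⟨h1, h2⟩)
  · -- d q = (q, x), e q = (x, q)
    exact ca_core hd he p q hpc hqc hdp hep
      (Prod.ext_iff.mpr ⟨h1, h2⟩) (Prod.ext_iff.mpr ⟨h3, h4⟩)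
  · exact hne (by rw [Prod.ext_iff]; exact ⟨h1.trans h3.symm, h2.trans h4.symm⟩)

lemma covers_agree (hd : IsDirectionFor x d) (he : IsDirectionFor x e)
    (p : {y : X // x ≤ y}) (hpc : x ⋖ p.1) (hpe : d p = e p) :
    ∀ q : {y : X // x ≤ y}, x ⋖ q.1 → d q = e q := by
  rcases pair_cover hpc (hd.2.1 p) with ⟨h1, h2⟩ | ⟨h1, h2⟩
  · have hdp : d p = (x, p.1) := Prod.ext_iff.mpr ⟨h1, h2⟩
    exact ca_half hd he p hpc hdp (hpe ▸ hdp)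
  · -- use swapped directions
    have hd' := isDirection_swap hd
    have he' := isDirection_swap he
    have hdp' : swapD d p = (x, p.1) := Prod.ext_iff.mpr ⟨h2, h1⟩
    have hep' : swapD e p = (x, p.1) := by
      have : swapD e p = swapD d p := by unfold swapD; rw [hpe]
      rw [this, hdp']
    intro q hqc
    have := ca_half hd' he' p hpc hdp' hep' q hqc
    have h1 : (d q).2 = (e q).2 := congrArg Prod.fst this
    have h2 : (d q).1 = (e q).1 := congrArg Prod.snd this
    exact Prod.ext_iff.mpr ⟨h2, h1⟩

end AuxLemmas4
section AuxLemmas5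

set_option linter.unusedSectionVars false

variable {X : Type*} [PartialOrder X] [OrderBot X]
variable {x : X} {d e : {y : X // x ≤ y} → X × X}

lemma mixed_contra (hd : IsDirectionFor x d) (he : IsDirectionFor x e)
    (hcov : ∀ q : {y : X // x ≤ y}, x ⋖ q.1 → d q = e q)
    (u : {y : X // x ≤ y}) (hfin : (Set.Icc x u.1).Finite) (hxu : x < u.1)
    (hdu1 : (d u).1 = u.1) (hdu2 : (d u).2 = x)
    (heu1 : (e u).1 = x) (heu2 : (e u).2 = u.1) : False := by
  have hTfin : ({z | x < z ∧ z ≤ u.1}).Finite := hfin.subset (fun z hz => ⟨hz.1.le, hz.2⟩)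
  obtain ⟨p', hp'T, hmin⟩ :=
    Set.Finite.exists_minimalFor id _ hTfin ⟨u.1, hxu, le_rfl⟩
  have hc : x ⋖ p' :=
    ⟨hp'T.1, fun c hc1 hc2 => hc2.not_ge (hmin (j := c) ⟨hc1, hc2.le.trans hp'T.2⟩ hc2.le)⟩
  set P' : {y : X // x ≤ y} := ⟨p', hc.le⟩ with hP'
  have hple : P'.1 ≤ u.1 := hp'T.2
  have hdp1 : (d P').1 = p' := by
    have g := (hd.2.2.1 P' u hple).1
    rw [hdu1] at g
    exact g.unique (glbp_left hple)
  have hep1 : (e P').1 = x := by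
    have g := (he.2.2.1 P' u hple).1
    rw [heu1] at g
    exact g.unique (glbp_right hc.le)
  have := hcov P' hc
  rw [Prod.ext_iff, hdp1, hep1] at this
  exact hc.lt.ne' this.1

lemma fin_agree (hd : IsDirectionFor x d) (he : IsDirectionFor x e)
    (hcov : ∀ q : {y : X // x ≤ y}, x ⋖ q.1 → d q = e q) :
    ∀ n : ℕ, ∀ u : {y : X // x ≤ y}, (Set.Icc x u.1).Finite →
      (Set.Icc x u.1).ncard ≤ n → d u = e u := by
  intro n
  induction n with
  | zero =>
    intro u hfin hc
    have : 0 < (Set.Icc x u.1).ncard := (Set.ncard_pos hfin).mpr ⟨x, le_rfl, u.2⟩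
    omega
  | succ n ih =>
    intro u hfin hc
    have IH : ∀ r : {y : X // x ≤ y}, r.1 < u.1 → d r = e r := by
      intro r hr
      have hsub : Set.Icc x r.1 ⊆ Set.Icc x u.1 := Set.Icc_subset_Icc le_rfl hr.le
      refine ih r (hfin.subset hsub) ?_
      have hss : Set.Icc x r.1 ⊂ Set.Icc x u.1 :=
        ⟨hsub, fun hts => hr.not_ge (hts ⟨u.2, le_rfl⟩).2⟩
      have := Set.ncard_lt_ncard hss hfin
      omega
    by_cases hux : u.1 = x
    · rw [dir_self hd u hux, dir_self he u hux]
    have hxu : x < u.1 := lt_of_le_of_ne u.2 (Ne.symm hux)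
    have hgd : IsGLB {(d u).1, (d u).2} x := (hd.2.1 u).2.2.1
    have hge : IsGLB {(e u).1, (e u).2} x := (he.2.1 u).2.2.1
    rcases pair_cases (hd.2.1 u) with ⟨a1, a2⟩ | ⟨a1, a2⟩ | ⟨pa1, pa2, pa3, pa4, _⟩ <;>
      rcases pair_cases (he.2.1 u) with ⟨b1, b2⟩ | ⟨b1, b2⟩ | ⟨pb1, pb2, pb3, pb4, _⟩
    · exact Prod.ext_iff.mpr ⟨a1.trans b1.symm, a2.trans b2.symm⟩
    · exact absurd (mixed_contra hd he hcov u hfin hxu a1 a2 b1 b2) id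
    · -- d u = (u, x), e u proper : restrict to (e u).2
      exfalso
      set r : {y : X // x ≤ y} := ⟨(e u).2, pb3.le⟩ with hr
      have hrle : r.1 ≤ u.1 := pb4.le
      have hdr : (d r).1 = r.1 := by
        have g := (hd.2.2.1 r u hrle).1
        rw [a1] at g
        exact g.unique (glbp_left hrle)
      have her : (e r).1 = x := by
        have g := (he.2.2.1 r u hrle).1
        refine g.unique ?_
        rw [show r.1 = (e u).2 from rfl, Set.pair_comm]
        exact hge
      have := IH r pb4
      rw [Prod.ext_iff, hdr, her] at this
      exact pb3.ne' this.1
    · exact absurd (mixed_contra he hd (fun q hq => (hcov q hq).symm) u hfin hxu b1 b2 a1 a2) id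
    · exact Prod.ext_iff.mpr ⟨a1.trans b1.symm, a2.trans b2.symm⟩
    · -- d u = (x, u), e u proper : restrict to (e u).1
      exfalso
      set r : {y : X // x ≤ y} := ⟨(e u).1, pb1.le⟩ with hr
      have hrle : r.1 ≤ u.1 := pb2.le
      have hdr : (d r).2 = r.1 := by
        have g := (hd.2.2.1 r u hrle).2
        rw [a2] at g
        exact g.unique (glbp_left hrle)
      have her : (e r).2 = x := by
        have g := (he.2.2.1 r u hrle).2
        exact g.unique hge
      have := IH r pb2
      rw [Prod.ext_iff, hdr, her] at this
      exact pb1.ne' this.2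
    · -- d u proper, e u = (u, x) : restrict to (d u).2
      exfalso
      set r : {y : X // x ≤ y} := ⟨(d u).2, pa3.le⟩ with hr
      have hrle : r.1 ≤ u.1 := pa4.le
      have her : (e r).1 = r.1 := by
        have g := (he.2.2.1 r u hrle).1
        rw [b1] at g
        exact g.unique (glbp_left hrle)
      have hdr : (d r).1 = x := by
        have g := (hd.2.2.1 r u hrle).1
        refine g.unique ?_
        rw [show r.1 = (d u).2 from rfl, Set.pair_comm]
        exact hgd
      have := IH r pa4
      rw [Prod.ext_iff, hdr, her] at this
      exact pa3.ne' this.1.symm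
    · -- d u proper, e u = (x, u) : restrict to (d u).1
      exfalso
      set r : {y : X // x ≤ y} := ⟨(d u).1, pa1.le⟩ with hr
      have hrle : r.1 ≤ u.1 := pa2.le
      have her : (e r).2 = r.1 := by
        have g := (he.2.2.1 r u hrle).2
        rw [b2] at g
        exact g.unique (glbp_left hrle)
      have hdr : (d r).2 = x := by
        have g := (hd.2.2.1 r u hrle).2
        exact g.unique hgd
      have := IH r pa2
      rw [Prod.ext_iff, hdr, her] at this
      exact pa1.ne' this.2.symm
    · -- both proper
      have hv : (d u).1 = (e u).1 := by
        have h1 : (d u).1 ≤ (e u).1 := by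
          set r : {y : X // x ≤ y} := ⟨(d u).1, pa1.le⟩ with hr
          have hdr : (d r).1 = r.1 := by
            have g := (hd.2.2.1 r u pa2.le).1
            exact g.unique (glbp_left le_rfl)
          have heq2 := IH r pa2
          have g := (he.2.2.1 r u pa2.le).1
          rw [← heq2, hdr] at g
          exact g.1 (Set.mem_insert_of_mem _ rfl)
        have h2 : (e u).1 ≤ (d u).1 := by
          set r : {y : X // x ≤ y} := ⟨(e u).1, pb1.le⟩ with hr
          have her : (e r).1 = r.1 := by
            have g := (he.2.2.1 r u pb2.le).1
            exact g.unique (glbp_left le_rfl)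
          have heq2 := IH r pb2
          have g := (hd.2.2.1 r u pb2.le).1
          rw [heq2, her] at g
          exact g.1 (Set.mem_insert_of_mem _ rfl)
        exact le_antisymm h1 h2
      have hw : (d u).2 = (e u).2 := by
        have h1 : (d u).2 ≤ (e u).2 := by
          set r : {y : X // x ≤ y} := ⟨(d u).2, pa3.le⟩ with hr
          have hdr : (d r).2 = r.1 := by
            have g := (hd.2.2.1 r u pa4.le).2
            exact g.unique (glbp_left le_rfl)
          have heq2 := IH r pa4
          have g := (he.2.2.1 r u pa4.le).2
          rw [← heq2, hdr] at g
          exact g.1 (Set.mem_insert_of_mem _ rfl)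
        have h2 : (e u).2 ≤ (d u).2 := by
          set r : {y : X // x ≤ y} := ⟨(e u).2, pb3.le⟩ with hr
          have her : (e r).2 = r.1 := by
            have g := (he.2.2.1 r u pb4.le).2
            exact g.unique (glbp_left le_rfl)
          have heq2 := IH r pb4
          have g := (hd.2.2.1 r u pb4.le).2
          rw [heq2, her] at g
          exact g.1 (Set.mem_insert_of_mem _ rfl)
        exact le_antisymm h1 h2
      exact Prod.ext_iff.mpr ⟨hv, hw⟩

end AuxLemmas5
section AuxLemmas6

set_option linter.unusedSectionVars false

variable {X : Type*} [PartialOrder X] [OrderBot X]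

/-- Compactness transfers to principal ideals. -/
lemma compact_subtype (h : IsOrthodomain X) {t a : X} (ha : CompactIn a) (hat : a ≤ t) :
    CompactIn (⟨a, hat⟩ : {y : X // y ≤ t}) := by
  intro D hne hdir l hl hal
  set D' : Set X := Subtype.val '' D with hD'
  have hne' : D'.Nonempty := hne.image _
  have hdir' : DirectedOn (· ≤ ·) D' := by
    rintro z₁ ⟨w₁, hw₁, rfl⟩ z₂ ⟨w₂, hw₂, rfl⟩
    obtain ⟨w₃, hw₃, h13, h23⟩ := hdir w₁ hw₁ w₂ hw₂
    exact ⟨w₃.1, ⟨w₃, hw₃, rfl⟩, h13, h23⟩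
  obtain ⟨l₀, hl₀⟩ := h.directed_joins D' hne' hdir'
  have hl₀t : l₀ ≤ l.1 := hl₀.2 (by rintro z ⟨w, hw, rfl⟩; exact hl.1 hw)
  have hlub : IsLUB D (⟨l₀, hl₀t.trans l.2⟩ : {y : X // y ≤ t}) := by
    constructor
    · intro w hw
      exact Subtype.coe_le_coe.mp (hl₀.1 ⟨w, hw, rfl⟩)
    · intro u hu
      refine Subtype.coe_le_coe.mp (hl₀.2 ?_)
      rintro z ⟨w, hw, rfl⟩
      exact hu hw
  have hll : l = ⟨l₀, hl₀t.trans l.2⟩ := hl.unique hlub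
  have hal₀ : a ≤ l₀ := by
    have := Subtype.coe_le_coe.mpr hal
    rw [hll] at hal
    exact hal
  obtain ⟨z, hz, haz⟩ := ha D' hne' hdir' l₀ hl₀ hal₀
  obtain ⟨w, hw, rfl⟩ := hz
  exact ⟨w, hw, Subtype.coe_le_coe.mp haz⟩

/-- A least upper bound of two compact elements is compact. -/
lemma compact_join {P : Type*} [PartialOrder P] {a b s : P}
    (ha : CompactIn a) (hb : CompactIn b) (hs : IsLUB {a, b} s) : CompactIn s := by
  intro D hne hdir l hl hsl
  have has : a ≤ s := hs.1 (Set.mem_insert _ _)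
  have hbs : b ≤ s := hs.1 (Set.mem_insert_of_mem _ rfl)
  obtain ⟨d₁, hd₁, had₁⟩ := ha D hne hdir l hl (has.trans hsl)
  obtain ⟨d₂, hd₂, hbd₂⟩ := hb D hne hdir l hl (hbs.trans hsl)
  obtain ⟨d₃, hd₃, h13, h23⟩ := hdir d₁ hd₁ d₂ hd₂
  refine ⟨d₃, hd₃, hs.2 ?_⟩
  intro z hz
  rcases hz with rfl | hz
  · exact had₁.trans h13
  · rw [Set.mem_singleton_iff] at hz; subst hz; exact hbd₂.trans h23

lemma finite_setoid (α : Type*) [Finite α] : Finite (Setoid α) := by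
  refine Finite.of_injective (fun s => s.r) ?_
  intro s t hst
  rcases s with ⟨r, hr⟩; rcases t with ⟨r', hr'⟩
  have : r = r' := hst
  subst this
  rfl

lemma finite_of_partitionLat {P : Type*} [PartialOrder P] (h : IsPartitionLat P) :
    Finite P := by
  obtain ⟨α, hα, ⟨iso⟩⟩ := h
  haveI := hα
  haveI := finite_setoid α
  exact Finite.of_equiv _ iso.toEquiv.symm

/-- A basic element is compact. -/
lemma basic_compact (h : IsOrthodomain X) {x : X} (hx : BasicIn x) : CompactIn x := by
  rcases hx with rfl | hx
  · intro D hne _ _ _ _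
    obtain ⟨z, hz⟩ := hne
    exact ⟨z, hz, bot_le⟩
  · exact h.atoms_compact x hx

/-- The join of a basic element with an atom inside `↓t` has finite interval. -/
lemma icc_finite (h : IsOrthodomain X) {x t : X} (hx : BasicIn x) (hxt : x ≤ t)
    {a : X} (ha : IsAtom a) (hat : a ≤ t) :
    ∃ s : X, x ≤ s ∧ a ≤ s ∧ s ≤ t ∧ (∀ c, c ≤ t → x ≤ c → a ≤ c → s ≤ c) ∧
      (Set.Icc x s).Finite := by
  obtain ⟨hlub, _, hpart⟩ := h.downset_boolean t
  obtain ⟨s', hs'⟩ := hlub {⟨x, hxt⟩, ⟨a, hat⟩}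
  have cx : CompactIn (⟨x, hxt⟩ : {y : X // y ≤ t}) :=
    compact_subtype h (basic_compact h hx) hxt
  have ca : CompactIn (⟨a, hat⟩ : {y : X // y ≤ t}) :=
    compact_subtype h (h.atoms_compact a ha) hat
  have cs : CompactIn s' := compact_join cx ca hs'
  have hfinP : Finite {y : {y : X // y ≤ t} // y ≤ s'} :=
    finite_of_partitionLat (hpart s' cs)
  refine ⟨s'.1, Subtype.coe_le_coe.mpr (hs'.1 (Set.mem_insert _ _)),
    Subtype.coe_le_coe.mpr (hs'.1 (Set.mem_insert_of_mem _ rfl)), s'.2, ?_, ?_⟩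
  · intro c hct hxc hac
    have hub : (⟨c, hct⟩ : {y : X // y ≤ t}) ∈
        upperBounds {(⟨x, hxt⟩ : {y : X // y ≤ t}), ⟨a, hat⟩} := by
      intro z hz
      rcases hz with rfl | hz
      · exact Subtype.mk_le_mk.mpr hxc
      · rw [Set.mem_singleton_iff] at hz; subst hz; exact Subtype.mk_le_mk.mpr hac
    exact Subtype.coe_le_coe.mpr (hs'.2 hub)
  · have : Finite ↥(Set.Icc x s'.1) := by
      refine Finite.of_injective
        (fun u => (⟨⟨u.1, u.2.2.trans s'.2⟩, Subtype.coe_le_coe.mp u.2.2⟩ :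
          {y : {y : X // y ≤ t} // y ≤ s'})) ?_
      intro u v huv
      exact Subtype.ext (congrArg (fun z => z.1.1) huv)
    exact Set.toFinite _

/-- Every basic non-maximal element is covered by some element. -/
lemma exists_cover (h : IsOrthodomain X) {x b : X} (hx : BasicIn x) (hlt : x < b) :
    ∃ p, x ⋖ p := by
  have hat := h.atomistic b
  have : ∃ a, (IsAtom a ∧ a ≤ b) ∧ ¬ a ≤ x := by
    by_contra h'
    push_neg at h'
    have : b ≤ x := hat.2 (fun z hz => h' z hz)
    exact hlt.not_ge this
  obtain ⟨a, ⟨haA, hab⟩, hax⟩ := this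
  obtain ⟨s, hxs, has, _, _, hfin⟩ := icc_finite h hx hlt.le haA hab
  have hxs' : x < s := lt_of_le_of_ne hxs (fun hh => hax (hh ▸ has))
  have hTfin : ({z | x < z ∧ z ≤ s}).Finite := hfin.subset (fun z hz => ⟨hz.1.le, hz.2⟩)
  obtain ⟨p', hp'T, hmin⟩ :=
    Set.Finite.exists_minimalFor id _ hTfin ⟨s, hxs', le_rfl⟩
  exact ⟨p', hp'T.1, fun c hc1 hc2 =>
    hc2.not_ge (hmin (j := c) ⟨hc1, hc2.le.trans hp'T.2⟩ hc2.le)⟩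

end AuxLemmas6
section AuxLemmas7

set_option linter.unusedSectionVars false

variable {X : Type*} [PartialOrder X] [OrderBot X]
variable {x : X} {d e : {y : X // x ≤ y} → X × X}

lemma key1 (h : IsOrthodomain X) (hx : BasicIn x)
    (hd : IsDirectionFor x d) (he : IsDirectionFor x e)
    (hcov : ∀ q : {y : X // x ≤ y}, x ⋖ q.1 → d q = e q)
    (t : {y : X // x ≤ y}) {a : X} (ha : IsAtom a) (hav : a ≤ (d t).1) :
    a ≤ (e t).1 := by
  have hvt : (d t).1 ≤ t.1 := (hd.2.1 t).1.1
  have hxv : x ≤ (d t).1 := pair_x_le_left (hd.2.1 t)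
  have hat : a ≤ t.1 := hav.trans hvt
  obtain ⟨s, hxs, has, hst, hmin, hfin⟩ := icc_finite h hx t.2 ha hat
  set r : {y : X // x ≤ y} := ⟨s, hxs⟩ with hrdef
  have hds : d r = e r := fin_agree hd he hcov (Set.Icc x s).ncard r hfin le_rfl
  have hsv : s ≤ (d t).1 := hmin _ hvt hxv hav
  have g := (hd.2.2.1 r t hst).1
  have hdr : (d r).1 = s := g.unique (glbp_left hsv)
  rw [hds] at hdr
  have g' := (he.2.2.1 r t hst).1
  rw [hdr] at g'
  exact has.trans (g'.1 (Set.mem_insert_of_mem _ rfl))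

lemma all_agree (h : IsOrthodomain X) (hx : BasicIn x)
    (hd : IsDirectionFor x d) (he : IsDirectionFor x e)
    (hcov : ∀ q : {y : X // x ≤ y}, x ⋖ q.1 → d q = e q) : d = e := by
  have main : ∀ (d e : {y : X // x ≤ y} → X × X), IsDirectionFor x d →
      IsDirectionFor x e → (∀ q : {y : X // x ≤ y}, x ⋖ q.1 → d q = e q) →
      ∀ t, (d t).1 = (e t).1 := by
    intro d e hd he hcov t
    have hset : {a | IsAtom a ∧ a ≤ (d t).1} = {a | IsAtom a ∧ a ≤ (e t).1} := by
      ext a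
      exact ⟨fun hh => ⟨hh.1, key1 h hx hd he hcov t hh.1 hh.2⟩,
        fun hh => ⟨hh.1, key1 h hx he hd (fun q hq => (hcov q hq).symm) t hh.1 hh.2⟩⟩
    refine (h.atomistic (d t).1).unique ?_
    rw [hset]
    exact h.atomistic (e t).1
  funext t
  have hv := main d e hd he hcov t
  have hcov' : ∀ q : {y : X // x ≤ y}, x ⋖ q.1 → swapD d q = swapD e q := by
    intro q hq
    unfold swapD
    rw [hcov q hq]
  have hw := main (swapD d) (swapD e) (isDirection_swap hd) (isDirection_swap he) hcov' t
  exact Prod.ext_iff.mpr ⟨hv, hw⟩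

end AuxLemmas7
/-- For an orthodomain `X` with no basic maximal elements, the following are
equivalent: (1) each basic element has a direction; (2) each basic element has
exactly two directions. -/
theorem stmt16 {X : Type*} [PartialOrder X] [OrderBot X]
    (h : IsOrthodomain X) (hp : ∀ x : X, BasicIn x → ¬ IsMax x) :
    (∀ x : X, BasicIn x → ∃ d, IsDirectionFor x d) ↔
    (∀ x : X, BasicIn x → ∃ d₁ d₂ : {y : X // x ≤ y} → X × X,
      d₁ ≠ d₂ ∧ IsDirectionFor x d₁ ∧ IsDirectionFor x d₂ ∧
      ∀ d, IsDirectionFor x d → d = d₁ ∨ d = d₂) := by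
  constructor
  · intro H x hx
    obtain ⟨d, hd⟩ := H x hx
    obtain ⟨b, hb⟩ := not_isMax_iff.mp (hp x hx)
    obtain ⟨p, hpc⟩ := exists_cover h hx hb
    set B : {y : X // x ≤ y} := ⟨b, hb.le⟩ with hBdef
    set P : {y : X // x ≤ y} := ⟨p, hpc.le⟩ with hPdef
    refine ⟨d, swapD d, ?_, hd, isDirection_swap hd, ?_⟩
    · -- d ≠ swapD d
      intro hdd
      have hBd : (d B).1 = (d B).2 := congrArg Prod.fst (congrFun hdd B)
      have hglb := (hd.2.1 B).2.2.1
      rw [← hBd] at hglb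
      have hxv : x = (d B).1 := hglb.unique (glbp_left le_rfl)
      rcases pair_cases (hd.2.1 B) with ⟨h1, _⟩ | ⟨_, h2⟩ | ⟨h1, _⟩
      · rw [h1] at hxv; exact hb.ne hxv
      · rw [hBd, h2] at hxv; exact hb.ne hxv
      · rw [← hxv] at h1; exact lt_irrefl x h1
    · intro e he
      by_cases hep : e P = d P
      · left
        exact all_agree h hx he hd (covers_agree he hd P hpc hep)
      · right
        have hde := pair_cover hpc (hd.2.1 P)
        have hee := pair_cover hpc (he.2.1 P)
        have heswap : e P = swapD d P := by
          rcases hde with ⟨h1, h2⟩ | ⟨h1, h2⟩ <;> rcases hee with ⟨h3, h4⟩ | ⟨h3, h4⟩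
          · exact absurd (Prod.ext_iff.mpr ⟨h3.trans h1.symm, h4.trans h2.symm⟩) hep
          · unfold swapD; exact Prod.ext_iff.mpr ⟨h3.trans h2.symm, h4.trans h1.symm⟩
          · unfold swapD; exact Prod.ext_iff.mpr ⟨h3.trans h2.symm, h4.trans h1.symm⟩
          · exact absurd (Prod.ext_iff.mpr ⟨h3.trans h1.symm, h4.trans h2.symm⟩) hep
        exact all_agree h hx he (isDirection_swap hd)
          (covers_agree he (isDirection_swap hd) P hpc heswap)
  · intro H x hx
    obtain ⟨d₁, _, _, h₁, _⟩ := H x hx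
    exact ⟨d₁, h₁⟩
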